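/- For the stability function R(z) = det(I − zA + z·𝟙bᵀ)/det(I − zA) of the implicit ARK2 component with χ = 2 − √2, one has R(z) → 0 as z → −∞ (i.e., the method is L-stable at infinity along the real axis). -/

import Mathlib

open Filter Real

theorem implicit_ARK2_L_stable_at_infinity :
    let χ : ℝ := 2 - Real.sqrt 2
    let A : Matrix (Fin 3) (Fin 3) ℝ :=
      !![0, 0, 0;
         χ/2, χ/2, 0;
         1/(2*Real.sqrt 2), 1/(2*Real.sqrt 2), 1 - 1/Real.sqrt 2]
    let b : Fin 3 → ℝ := ![1/2 - χ/4, 1/2 - χ/4, χ/2]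
    let R : ℝ → ℝ := fun z =>
      Matrix.det (1 - z • A + z • Matrix.vecMulVec (fun _ => 1) b) /
        Matrix.det (1 - z • A)
    Filter.Tendsto R Filter.atBot (nhds 0) := by
  intro χ A b R
  have hs : Real.sqrt 2 ^ 2 = 2 := Real.sq_sqrt (by norm_num)
  have hsnn : (0:ℝ) ≤ Real.sqrt 2 := Real.sqrt_nonneg 2
  have hs0 : Real.sqrt 2 ≠ 0 := by positivity
  have hs1 : 1 < Real.sqrt 2 := by nlinarith
  have hs2 : Real.sqrt 2 < 2 := by nlinarith
  set c : ℝ := 1 - Real.sqrt 2 / 2 with hcdef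
  have hc : 0 < c := by rw [hcdef]; linarith
  -- closed form of R
  have hR : ∀ z : ℝ, R z = (1 + (Real.sqrt 2 - 1)*z) / (1 - c*z)^2 := by
    intro z
    have hN : Matrix.det (1 - z • A + z • Matrix.vecMulVec (fun _ => 1) b)
        = 1 + (Real.sqrt 2 - 1)*z := by
      simp [Matrix.det_fin_three, Matrix.vecMulVec_apply, Matrix.one_apply, A, b, χ]
      field_simp
      ring_nf
      linear_combination (-64*z - 32*z^2*Real.sqrt 2) * hs
    have hD : Matrix.det (1 - z • A) = (1 - c*z)^2 := by
      rw [hcdef]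
      simp [Matrix.det_fin_three, Matrix.one_apply, A, χ]
      field_simp
      ring_nf
      linear_combination (-2*z + 2*z^2 - z^2*Real.sqrt 2) * hs
    simp only [R, hN, hD]
  -- the limit
  have hg : Filter.Tendsto (fun u : ℝ => (u^2 + (Real.sqrt 2 - 1)*u) / (u - c)^2)
      (nhds 0) (nhds 0) := by
    have h0 : ((0:ℝ)^2 + (Real.sqrt 2 - 1)*0) / ((0:ℝ) - c)^2 = 0 := by
      rw [div_eq_zero_iff]; left; ring
    have hca : ContinuousAt (fun u : ℝ => (u^2 + (Real.sqrt 2 - 1)*u) / (u - c)^2) 0 := by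
      apply ContinuousAt.div (by fun_prop) (by fun_prop)
      exact pow_ne_zero 2 (by simp [hcdef]; nlinarith)
    simpa [h0] using hca.tendsto
  have hinv : Filter.Tendsto (fun z : ℝ => z⁻¹) Filter.atBot (nhds 0) := by
    have h := (tendsto_inv_atTop_zero (𝕜 := ℝ)).comp tendsto_neg_atBot_atTop
    have h2 := h.neg
    simp only [Function.comp_def, neg_zero] at h2
    convert h2 using 2 with x
    ring
  apply (hg.comp hinv).congr'
  filter_upwards [Filter.eventually_lt_atBot (0:ℝ)] with z hz
  have hz0 : z ≠ 0 := ne_of_lt hz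
  have hden1 : (0:ℝ) < 1 - c*z := by nlinarith
  have hden2 : z⁻¹ - c < 0 := by
    have : z⁻¹ < 0 := inv_neg''.mpr hz
    linarith
  rw [Function.comp_apply, hR z]
  have h2 : ((z⁻¹ - c)^2) ≠ 0 := pow_ne_zero 2 (ne_of_lt hden2)
  have h1 : ((1 - c*z)^2) ≠ 0 := by positivity
  rw [div_eq_div_iff h2 h1]
  field_simp
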